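/- Let A : dom A ⊆ H₁ → H₁, B : dom B ⊆ H₂ → H₁, C : dom C ⊆ H₁ → H₂, D : dom D ⊆ H₂ → H₂ be linear operators with ⟨Bg, f⟩ = ⟨g, Cf⟩ for all g ∈ dom B and f ∈ dom C (i.e. C ⊆ B*). Assume there are φ, ψ ∈ [0, π/2) with ⟨Af, f⟩ ∈ Σ_φ for all f ∈ dom A and ⟨Dg, g⟩ ∈ −Σ_ψ for all g ∈ dom D, and set τ := max{φ, ψ}. Let λ ∈ ℂ be such that D − λ is boundedly invertible. If arg λ ∈ (τ, π − τ), then for every f ∈ dom S₁(λ) with ‖f‖ = 1 one has arg(⟨S₁(λ)f, f⟩ + λ) ∈ [−arg λ, τ]; if arg λ ∈ (−π + τ, −τ), then for every such f one has arg(⟨S₁(λ)f, f⟩ + λ) ∈ [−τ, −arg λ]. -/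

import Mathlib

open Real

noncomputable section

variable {H₁ H₂ : Type*}
  [NormedAddCommGroup H₁] [InnerProductSpace ℂ H₁] [CompleteSpace H₁]
  [NormedAddCommGroup H₂] [InnerProductSpace ℂ H₂] [CompleteSpace H₂]

local notation "⟪" x ", " y "⟫" => @inner ℂ _ _ x y

/-- The closed sector `Σ_ω = {z ∈ ℂ : |arg z| ≤ ω}` with semi-axis `ℝ₊` and
semi-angle `ω`. -/
def SigmaSector (ω : ℝ) : Set ℂ := {z : ℂ | |z.arg| ≤ ω}

lemma im_exp_neg_mul (θ : ℝ) (z : ℂ) :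
    (Complex.exp (-(θ:ℂ) * Complex.I) * z).im = ‖z‖ * Real.sin (z.arg - θ) := by
  conv_lhs => rw [← Complex.norm_mul_exp_arg_mul_I z]
  rw [mul_left_comm, ← Complex.exp_add]
  have : -(θ:ℂ) * Complex.I + (z.arg : ℂ) * Complex.I = ((z.arg - θ : ℝ) : ℂ) * Complex.I := by
    push_cast; ring
  rw [this, Complex.exp_mul_I]
  simp [Complex.mul_im, Complex.add_im, Complex.cos_ofReal_im, Complex.sin_ofReal_re,
    -Complex.ofReal_sub]

lemma im_term_nonpos (θ : ℝ) (z : ℂ) (h1 : -π ≤ z.arg - θ) (h2 : z.arg - θ ≤ 0) :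
    (Complex.exp (-(θ:ℂ) * Complex.I) * z).im ≤ 0 := by
  rw [im_exp_neg_mul]
  exact mul_nonpos_of_nonneg_of_nonpos (norm_nonneg z)
    (Real.sin_nonpos_of_nonpos_of_neg_pi_le h2 h1)

lemma im_term_nonneg (θ : ℝ) (z : ℂ) (h1 : 0 ≤ z.arg - θ) (h2 : z.arg - θ ≤ π) :
    0 ≤ (Complex.exp (-(θ:ℂ) * Complex.I) * z).im := by
  rw [im_exp_neg_mul]
  exact mul_nonneg (norm_nonneg z) (Real.sin_nonneg_of_nonneg_of_le_pi h1 h2)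

lemma arg_mem_Icc_of_im (θ₁ θ₂ : ℝ) (h1 : -π < θ₁) (h10 : θ₁ ≤ 0) (h20 : 0 ≤ θ₂)
    (h2π : θ₂ < π) (hlt : 0 < θ₂ - θ₁) (hltπ : θ₂ - θ₁ < π) (w : ℂ)
    (hu : (Complex.exp (-(θ₂:ℂ) * Complex.I) * w).im ≤ 0)
    (hv : 0 ≤ (Complex.exp (-(θ₁:ℂ) * Complex.I) * w).im) :
    w.arg ∈ Set.Icc θ₁ θ₂ := by
  by_cases hw : w = 0
  · simp only [hw, Complex.arg_zero, Set.mem_Icc]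
    exact ⟨h10, h20⟩
  rw [im_exp_neg_mul] at hu hv
  have habs : 0 < ‖w‖ := norm_pos_iff.mpr hw
  set x := w.arg with hx
  have hu' : Real.sin (x - θ₂) ≤ 0 := by nlinarith
  have hv' : 0 ≤ Real.sin (x - θ₁) := by nlinarith
  have hx1 : -π < x := Complex.neg_pi_lt_arg w
  have hx2 : x ≤ π := Complex.arg_le_pi w
  constructor
  · by_contra h; push_neg at h
    rcases lt_or_ge (-π) (x - θ₁) with h' | h'
    · have : Real.sin (x - θ₁) < 0 :=
        Real.sin_neg_of_neg_of_neg_pi_lt (by linarith) h'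
      linarith
    · have : 0 < Real.sin (x - θ₂) := by
        rw [← Real.sin_add_two_pi]
        apply Real.sin_pos_of_pos_of_lt_pi <;> linarith
      linarith
  · by_contra h; push_neg at h
    rcases lt_or_ge (x - θ₂) π with h' | h'
    · have : 0 < Real.sin (x - θ₂) :=
        Real.sin_pos_of_pos_of_lt_pi (by linarith) h'
      linarith
    · have : Real.sin (x - θ₁) < 0 := by
        rw [← Real.sin_sub_two_pi]
        apply Real.sin_neg_of_neg_of_neg_pi_lt <;> linarith
      linarith

lemma arg_add3_mem (θ₁ θ₂ : ℝ) (h1 : -π < θ₁) (h10 : θ₁ ≤ 0) (h20 : 0 ≤ θ₂)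
    (h2π : θ₂ < π) (hlt : 0 < θ₂ - θ₁) (hltπ : θ₂ - θ₁ < π) (a b μ : ℂ) (t : ℝ)
    (ht : 0 ≤ t) (ha : a.arg ∈ Set.Icc θ₁ θ₂) (hb : b.arg ∈ Set.Icc θ₁ θ₂)
    (hμ : μ.arg ∈ Set.Icc θ₁ θ₂) :
    (a + b + (t:ℂ) * μ).arg ∈ Set.Icc θ₁ θ₂ := by
  obtain ⟨ha1, ha2⟩ := ha
  obtain ⟨hb1, hb2⟩ := hb
  obtain ⟨hμ1, hμ2⟩ := hμ
  apply arg_mem_Icc_of_im θ₁ θ₂ h1 h10 h20 h2π hlt hltπ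
  · have h3 : Complex.exp (-(θ₂:ℂ)*Complex.I) * (a + b + (t:ℂ)*μ)
        = Complex.exp (-(θ₂:ℂ)*Complex.I) * a + Complex.exp (-(θ₂:ℂ)*Complex.I) * b
          + (t:ℂ) * (Complex.exp (-(θ₂:ℂ)*Complex.I) * μ) := by ring
    rw [h3, Complex.add_im, Complex.add_im, Complex.im_ofReal_mul]
    have t1 := im_term_nonpos θ₂ a (by linarith) (by linarith)
    have t2 := im_term_nonpos θ₂ b (by linarith) (by linarith)
    have t3 := im_term_nonpos θ₂ μ (by linarith) (by linarith)
    nlinarith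
  · have h3 : Complex.exp (-(θ₁:ℂ)*Complex.I) * (a + b + (t:ℂ)*μ)
        = Complex.exp (-(θ₁:ℂ)*Complex.I) * a + Complex.exp (-(θ₁:ℂ)*Complex.I) * b
          + (t:ℂ) * (Complex.exp (-(θ₁:ℂ)*Complex.I) * μ) := by ring
    rw [h3, Complex.add_im, Complex.add_im, Complex.im_ofReal_mul]
    have t1 := im_term_nonneg θ₁ a (by linarith) (by linarith)
    have t2 := im_term_nonneg θ₁ b (by linarith) (by linarith)
    have t3 := im_term_nonneg θ₁ μ (by linarith) (by linarith)
    nlinarith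

/-- If `C ⊆ B*`, `W(A) ⊆ Σ_φ`, `W(D) ⊆ −Σ_ψ` with `φ, ψ ∈ [0, π/2)`, `τ = max{φ, ψ}`,
and `D − λ` is boundedly invertible, then for unit `f ∈ dom S₁(λ)`:
`arg λ ∈ (τ, π − τ)` implies `arg(⟨S₁(λ)f, f⟩ + λ) ∈ [−arg λ, τ]`, and
`arg λ ∈ (−π + τ, −τ)` implies `arg(⟨S₁(λ)f, f⟩ + λ) ∈ [−τ, −arg λ]`. -/
theorem schur_numRange_arg_bound
    (A : H₁ →ₗ.[ℂ] H₁) (B : H₂ →ₗ.[ℂ] H₁) (C : H₁ →ₗ.[ℂ] H₂) (D : H₂ →ₗ.[ℂ] H₂)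
    (hCB : ∀ (g : B.domain) (f : C.domain), ⟪(f : H₁), B g⟫ = ⟪C f, (g : H₂)⟫)
    (φ ψ : ℝ) (hφ0 : 0 ≤ φ) (hφ1 : φ < π / 2) (hψ0 : 0 ≤ ψ) (hψ1 : ψ < π / 2)
    (hA : ∀ f : A.domain, ⟪(f : H₁), A f⟫ ∈ SigmaSector φ)
    (hD : ∀ g : D.domain, ⟪(g : H₂), D g⟫ ∈ -SigmaSector ψ)
    (l : ℂ)
    (R : H₂ →L[ℂ] H₂)
    (hR1 : ∀ v : D.domain, R (D v - l • (v : H₂)) = v)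
    (hR2 : ∀ h : H₂, ∃ hm : R h ∈ D.domain, D ⟨R h, hm⟩ - l • (R h) = h) :
    (l.arg ∈ Set.Ioo (max φ ψ) (π - max φ ψ) →
      ∀ (f : H₁) (hfA : f ∈ A.domain) (hfC : f ∈ C.domain)
        (hB : R (C ⟨f, hfC⟩) ∈ B.domain), ‖f‖ = 1 →
        (⟪f, A ⟨f, hfA⟩ - l • f - B ⟨R (C ⟨f, hfC⟩), hB⟩⟫ + l).arg ∈
          Set.Icc (-l.arg) (max φ ψ)) ∧
    (l.arg ∈ Set.Ioo (-π + max φ ψ) (-(max φ ψ)) →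
      ∀ (f : H₁) (hfA : f ∈ A.domain) (hfC : f ∈ C.domain)
        (hB : R (C ⟨f, hfC⟩) ∈ B.domain), ‖f‖ = 1 →
        (⟪f, A ⟨f, hfA⟩ - l • f - B ⟨R (C ⟨f, hfC⟩), hB⟩⟫ + l).arg ∈
          Set.Icc (-(max φ ψ)) (-l.arg)) := by
  have hφτ : φ ≤ max φ ψ := le_max_left φ ψ
  have hψτ : ψ ≤ max φ ψ := le_max_right φ ψ
  have hτ0 : 0 ≤ max φ ψ := le_trans hφ0 hφτ
  have hτπ : max φ ψ < π / 2 := max_lt hφ1 hψ1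
  have hπ : 0 < π := Real.pi_pos
  have hmain : ∀ (f : H₁) (hfA : f ∈ A.domain) (hfC : f ∈ C.domain)
      (hB : R (C ⟨f, hfC⟩) ∈ B.domain), ‖f‖ = 1 →
      ∃ (a b : ℂ) (t : ℝ), 0 ≤ t ∧ |a.arg| ≤ φ ∧ |b.arg| ≤ ψ ∧
        ⟪f, A ⟨f, hfA⟩ - l • f - B ⟨R (C ⟨f, hfC⟩), hB⟩⟫ + l
          = a + b + (t : ℂ) * (starRingEnd ℂ) l := by
    intro f hfA hfC hB hf1
    obtain ⟨hm, hDg⟩ := hR2 (C ⟨f, hfC⟩)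
    set g : H₂ := R (C ⟨f, hfC⟩) with hg
    set d : ℂ := ⟪g, D ⟨g, hm⟩⟫ with hd
    have hd2 : |(-d).arg| ≤ ψ := by
      have hmem : d ∈ -SigmaSector ψ := hD ⟨g, hm⟩
      exact Set.mem_neg.mp hmem
    refine ⟨⟪f, A ⟨f, hfA⟩⟫, -(starRingEnd ℂ) d, ‖g‖^2, sq_nonneg _, hA ⟨f, hfA⟩, ?_, ?_⟩
    · have hne : (-d).arg ≠ π := by
        intro h
        have := (abs_le.mp hd2).2
        rw [h] at this; linarith
      have hmn : -(starRingEnd ℂ) d = (starRingEnd ℂ) (-d) := (map_neg _ _).symm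
      rw [hmn, Complex.arg_conj, if_neg hne, abs_neg]
      exact hd2
    · have e1 : ⟪f, A ⟨f, hfA⟩ - l • f - B ⟨g, hB⟩⟫
          = ⟪f, A ⟨f, hfA⟩⟫ - ⟪f, l • f⟫ - ⟪f, B ⟨g, hB⟩⟫ := by
        rw [inner_sub_right, inner_sub_right]
      have e2 : ⟪f, l • f⟫ = l := by
        rw [inner_smul_right, inner_self_eq_norm_sq_to_K, hf1]
        norm_num
      have e3 : ⟪f, B ⟨g, hB⟩⟫ = ⟪(C ⟨f, hfC⟩ : H₂), g⟫ := hCB ⟨g, hB⟩ ⟨f, hfC⟩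
      have e4 : (C ⟨f, hfC⟩ : H₂) = D ⟨g, hm⟩ - l • g := by rw [← hDg]
      have e5 : ⟪D ⟨g, hm⟩ - l • g, g⟫
          = (starRingEnd ℂ) d - (starRingEnd ℂ) l * ((‖g‖^2 : ℝ) : ℂ) := by
        rw [inner_sub_left, inner_smul_left, ← inner_conj_symm (D ⟨g, hm⟩ : H₂) g, ← hd,
          inner_self_eq_norm_sq_to_K]
        push_cast
        rfl
      rw [e1, e2, e3, e4, e5]
      push_cast
      ring
  constructor
  · intro hl f hfA hfC hB hf1
    obtain ⟨a, b, t, ht, haφ, hbψ, heq⟩ := hmain f hfA hfC hB hf1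
    rw [heq]
    obtain ⟨hl1, hl2⟩ := hl
    have hlπ : l.arg ≠ π := by intro h; rw [h] at hl2; linarith
    have hμarg : ((starRingEnd ℂ) l).arg = -l.arg := by
      rw [Complex.arg_conj, if_neg hlπ]
    have ha' := abs_le.mp haφ
    have hb' := abs_le.mp hbψ
    exact arg_add3_mem (-l.arg) (max φ ψ) (by linarith) (by linarith) hτ0 (by linarith)
      (by linarith) (by linarith) a b _ t ht
      ⟨by linarith, by linarith⟩ ⟨by linarith, by linarith⟩
      ⟨by rw [hμarg], by rw [hμarg]; linarith⟩
  · intro hl f hfA hfC hB hf1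
    obtain ⟨a, b, t, ht, haφ, hbψ, heq⟩ := hmain f hfA hfC hB hf1
    rw [heq]
    obtain ⟨hl1, hl2⟩ := hl
    have hlπ : l.arg ≠ π := by intro h; rw [h] at hl2; linarith
    have hμarg : ((starRingEnd ℂ) l).arg = -l.arg := by
      rw [Complex.arg_conj, if_neg hlπ]
    have ha' := abs_le.mp haφ
    have hb' := abs_le.mp hbψ
    exact arg_add3_mem (-(max φ ψ)) (-l.arg) (by linarith) (by linarith) (by linarith)
      (by linarith) (by linarith) (by linarith) a b _ t ht
      ⟨by linarith, by linarith⟩ ⟨by linarith, by linarith⟩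
      ⟨by rw [hμarg]; linarith, by rw [hμarg]⟩

end
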